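/- For s ∈ ℂ let u_s : ℍ → ℂ be defined by u_s(z) = (Im(z)/|z|)^s = exp(s·log(Im(z)/|z|)) (the base being a positive real number). Then for every z = x+iy ∈ ℍ, y²·(∂²u_s/∂x² + ∂²u_s/∂y²)(z) + s(1−s)·u_s(z) = −s²·u_{s+2}(z); that is, (Δ + s(1−s))(Im(z)/|z|)^s = −s²(Im(z)/|z|)^{s+2}, where Δ = y²(∂²/∂x² + ∂²/∂y²) is the hyperbolic Laplacian. -/

import Mathlib

open Complex

noncomputable section

/-- `u_s(x + iy) = (y/|x+iy|)^s`, as a function of the two real variables `x, y`. -/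
def uHyp (s : ℂ) (x y : ℝ) : ℂ :=
  (((y / Real.sqrt (x ^ 2 + y ^ 2)) : ℝ) : ℂ) ^ s

namespace Statement13Aux

lemma uHyp_eq (s : ℂ) (x y : ℝ) (hy : 0 < y) :
    uHyp s x y
      = Complex.exp (s * ((Real.log y - (1/2) * Real.log (x ^ 2 + y ^ 2) : ℝ) : ℂ)) := by
  have hq : (0:ℝ) < x ^ 2 + y ^ 2 := by positivity
  have hs : (0:ℝ) < Real.sqrt (x ^ 2 + y ^ 2) := Real.sqrt_pos.mpr hq
  have ht : (0:ℝ) < y / Real.sqrt (x ^ 2 + y ^ 2) := div_pos hy hs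
  have hne : ((y / Real.sqrt (x ^ 2 + y ^ 2) : ℝ) : ℂ) ≠ 0 := by exact_mod_cast ht.ne'
  rw [uHyp, Complex.cpow_def_of_ne_zero hne]
  rw [← Complex.ofReal_log ht.le, Real.log_div hy.ne' hs.ne', Real.log_sqrt hq.le]
  ring_nf

lemma hasDerivAt_x (s : ℂ) (y : ℝ) (hy : 0 < y) (x : ℝ) :
    HasDerivAt (fun x' => uHyp s x' y)
      (uHyp s x y * (s * ((-(x / (x ^ 2 + y ^ 2)) : ℝ) : ℂ))) x := by
  have hq : (0:ℝ) < x ^ 2 + y ^ 2 := by positivity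
  have h1 : HasDerivAt (fun x' : ℝ => x' ^ 2 + y ^ 2) (2 * x) x := by
    simpa using (hasDerivAt_pow 2 x).add_const (y ^ 2)
  have hL : HasDerivAt (fun x' : ℝ => Real.log y - 1/2 * Real.log (x' ^ 2 + y ^ 2))
      (-(x / (x ^ 2 + y ^ 2))) x := by
    have h2 := (Real.hasDerivAt_log hq.ne').comp x h1
    have h3 := (h2.const_mul (1/2 : ℝ)).const_sub (Real.log y)
    refine h3.congr_deriv ?_
    field_simp
  have h4 := ((hL.ofReal_comp.const_mul s)).cexp
  have heq : (fun x' : ℝ => uHyp s x' y)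
      = fun x' : ℝ => Complex.exp
          (s * ((Real.log y - 1/2 * Real.log (x' ^ 2 + y ^ 2) : ℝ) : ℂ)) := by
    funext x'
    exact uHyp_eq s x' y hy
  rw [heq, uHyp_eq s x y hy]
  convert h4 using 1

lemma hasDerivAt_y (s : ℂ) (x : ℝ) {y : ℝ} (hy : 0 < y) :
    HasDerivAt (fun y' => uHyp s x y')
      (uHyp s x y * (s * ((1 / y - y / (x ^ 2 + y ^ 2) : ℝ) : ℂ))) y := by
  have hq : (0:ℝ) < x ^ 2 + y ^ 2 := by positivity
  have h1 : HasDerivAt (fun y' : ℝ => x ^ 2 + y' ^ 2) (2 * y) y := by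
    simpa using ((hasDerivAt_pow 2 y).const_add (x ^ 2))
  have hL : HasDerivAt (fun y' : ℝ => Real.log y' - 1/2 * Real.log (x ^ 2 + y' ^ 2))
      (1 / y - y / (x ^ 2 + y ^ 2)) y := by
    have h2 := (Real.hasDerivAt_log hq.ne').comp y h1
    have h3 := (Real.hasDerivAt_log hy.ne').sub (h2.const_mul (1/2 : ℝ))
    refine h3.congr_deriv ?_
    field_simp
  have h4 := ((hL.ofReal_comp.const_mul s)).cexp
  have heq : ∀ᶠ y' in nhds y, uHyp s x y'
      = Complex.exp (s * ((Real.log y' - 1/2 * Real.log (x ^ 2 + y' ^ 2) : ℝ) : ℂ)) := by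
    filter_upwards [eventually_gt_nhds hy] with y' hy'
    exact uHyp_eq s x y' hy'
  rw [uHyp_eq s x y hy]
  exact h4.congr_of_eventuallyEq heq

lemma second_x (s : ℂ) (x y : ℝ) (hy : 0 < y) :
    deriv (fun x' : ℝ => deriv (fun x'' : ℝ => uHyp s x'' y) x') x
      = uHyp s x y * (s * ((-(x / (x ^ 2 + y ^ 2)) : ℝ) : ℂ)) * (s * ((-(x / (x ^ 2 + y ^ 2)) : ℝ) : ℂ))
        + uHyp s x y * (s * ((-(((x ^ 2 + y ^ 2) - 2 * x ^ 2) / (x ^ 2 + y ^ 2) ^ 2) : ℝ) : ℂ)) := by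
  have heq : (fun x' : ℝ => deriv (fun x'' : ℝ => uHyp s x'' y) x')
      = fun x' : ℝ => uHyp s x' y * (s * ((-(x' / (x' ^ 2 + y ^ 2)) : ℝ) : ℂ)) := by
    funext x'
    exact (hasDerivAt_x s y hy x').deriv
  rw [heq]
  have hq : (0:ℝ) < x ^ 2 + y ^ 2 := by positivity
  have hm : HasDerivAt (fun x' : ℝ => -(x' / (x' ^ 2 + y ^ 2)))
      (-(((x ^ 2 + y ^ 2) - 2 * x ^ 2) / (x ^ 2 + y ^ 2) ^ 2)) x := by
    have h1 : HasDerivAt (fun x' : ℝ => x' ^ 2 + y ^ 2) (2 * x) x := by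
      simpa using (hasDerivAt_pow 2 x).add_const (y ^ 2)
    have h2 := ((hasDerivAt_id x).div h1 hq.ne').neg
    refine h2.congr_deriv ?_
    field_simp
    simp only [id_eq]
    ring
  have hB : HasDerivAt (fun x' : ℝ => (s * ((-(x' / (x' ^ 2 + y ^ 2)) : ℝ) : ℂ)))
      (s * ((-(((x ^ 2 + y ^ 2) - 2 * x ^ 2) / (x ^ 2 + y ^ 2) ^ 2) : ℝ) : ℂ)) x :=
    hm.ofReal_comp.const_mul s
  exact ((hasDerivAt_x s y hy x).mul hB).deriv

lemma second_y (s : ℂ) (x : ℝ) {y : ℝ} (hy : 0 < y) :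
    deriv (fun y' : ℝ => deriv (fun y'' : ℝ => uHyp s x y'') y') y
      = uHyp s x y * (s * ((1 / y - y / (x ^ 2 + y ^ 2) : ℝ) : ℂ)) * (s * ((1 / y - y / (x ^ 2 + y ^ 2) : ℝ) : ℂ))
        + uHyp s x y * (s * ((-(1 / y ^ 2) - ((x ^ 2 + y ^ 2) - 2 * y ^ 2) / (x ^ 2 + y ^ 2) ^ 2 : ℝ) : ℂ)) := by
  have hq : (0:ℝ) < x ^ 2 + y ^ 2 := by positivity
  have heq : ∀ᶠ y' in nhds y, deriv (fun y'' : ℝ => uHyp s x y'') y'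
      = uHyp s x y' * (s * ((1 / y' - y' / (x ^ 2 + y' ^ 2) : ℝ) : ℂ)) := by
    filter_upwards [eventually_gt_nhds hy] with y' hy'
    exact (hasDerivAt_y s x hy').deriv
  rw [Filter.EventuallyEq.deriv_eq heq]
  have hm : HasDerivAt (fun y' : ℝ => 1 / y' - y' / (x ^ 2 + y' ^ 2))
      (-(1 / y ^ 2) - ((x ^ 2 + y ^ 2) - 2 * y ^ 2) / (x ^ 2 + y ^ 2) ^ 2) y := by
    have h1 : HasDerivAt (fun y' : ℝ => x ^ 2 + y' ^ 2) (2 * y) y := by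
      simpa using ((hasDerivAt_pow 2 y).const_add (x ^ 2))
    have h2 := (hasDerivAt_id y).div h1 hq.ne'
    have hinv : HasDerivAt (fun y' : ℝ => 1 / y') (-(1 / y ^ 2)) y := by
      simpa only [one_div] using hasDerivAt_inv hy.ne'
    have h3 := hinv.sub h2
    refine h3.congr_deriv ?_
    field_simp
    simp only [id_eq]
    ring
  have hB : HasDerivAt (fun y' : ℝ => (s * ((1 / y' - y' / (x ^ 2 + y' ^ 2) : ℝ) : ℂ)))
      (s * ((-(1 / y ^ 2) - ((x ^ 2 + y ^ 2) - 2 * y ^ 2) / (x ^ 2 + y ^ 2) ^ 2 : ℝ) : ℂ)) y :=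
    hm.ofReal_comp.const_mul s
  exact ((hasDerivAt_y s x hy).mul hB).deriv

lemma uHyp_add_two (s : ℂ) (x y : ℝ) (hy : 0 < y) :
    uHyp (s + 2) x y = uHyp s x y * ((y ^ 2 / (x ^ 2 + y ^ 2) : ℝ) : ℂ) := by
  have hq : (0:ℝ) < x ^ 2 + y ^ 2 := by positivity
  have hs : (0:ℝ) < Real.sqrt (x ^ 2 + y ^ 2) := Real.sqrt_pos.mpr hq
  have ht : (0:ℝ) < y / Real.sqrt (x ^ 2 + y ^ 2) := div_pos hy hs
  have hne : ((y / Real.sqrt (x ^ 2 + y ^ 2) : ℝ) : ℂ) ≠ 0 := by exact_mod_cast ht.ne'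
  rw [uHyp, uHyp, Complex.cpow_add _ _ hne]
  congr 1
  rw [show (2:ℂ) = ((2:ℕ):ℂ) by norm_num, Complex.cpow_natCast, ← Complex.ofReal_pow,
    div_pow, Real.sq_sqrt hq.le]

end Statement13Aux

/-- `(Δ + s(1-s)) (Im z/|z|)^s = -s² (Im z/|z|)^{s+2}`, where
`Δ = y²(∂²/∂x² + ∂²/∂y²)` is the hyperbolic Laplacian. -/
theorem statement13 (s : ℂ) (x y : ℝ) (hy : 0 < y) :
    ((y : ℂ)) ^ 2 *
        (deriv (fun x' : ℝ => deriv (fun x'' : ℝ => uHyp s x'' y) x') x +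
         deriv (fun y' : ℝ => deriv (fun y'' : ℝ => uHyp s x y'') y') y) +
      s * (1 - s) * uHyp s x y =
    -s ^ 2 * uHyp (s + 2) x y := by
  have hq : (0:ℝ) < x ^ 2 + y ^ 2 := by positivity
  rw [Statement13Aux.second_x s x y hy, Statement13Aux.second_y s x hy,
    Statement13Aux.uHyp_add_two s x y hy]
  have hqC : ((x:ℂ) ^ 2 + (y:ℂ) ^ 2) ≠ 0 := by
    have : ((x ^ 2 + y ^ 2 : ℝ) : ℂ) ≠ 0 := by exact_mod_cast hq.ne'
    push_cast at this
    exact this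
  have hyC : (y : ℂ) ≠ 0 := by exact_mod_cast hy.ne'
  have key : ((y : ℂ)) ^ 2 *
        ((s * ((-(x / (x ^ 2 + y ^ 2)) : ℝ) : ℂ)) * (s * ((-(x / (x ^ 2 + y ^ 2)) : ℝ) : ℂ))
          + s * ((-(((x ^ 2 + y ^ 2) - 2 * x ^ 2) / (x ^ 2 + y ^ 2) ^ 2) : ℝ) : ℂ)
          + (s * ((1 / y - y / (x ^ 2 + y ^ 2) : ℝ) : ℂ)) * (s * ((1 / y - y / (x ^ 2 + y ^ 2) : ℝ) : ℂ))
          + s * ((-(1 / y ^ 2) - ((x ^ 2 + y ^ 2) - 2 * y ^ 2) / (x ^ 2 + y ^ 2) ^ 2 : ℝ) : ℂ))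
      + s * (1 - s) = -s ^ 2 * ((y ^ 2 / (x ^ 2 + y ^ 2) : ℝ) : ℂ) := by
    have h1 : ((x:ℂ) ^ 2 + (y:ℂ) ^ 2) * ((x:ℂ) ^ 2 + (y:ℂ) ^ 2)⁻¹ = 1 := mul_inv_cancel₀ hqC
    have h2 : (y:ℂ) * (y:ℂ)⁻¹ = 1 := mul_inv_cancel₀ hyC
    push_cast
    linear_combination (s ^ 2 - s) * ((y:ℂ) * (y:ℂ)⁻¹ + 1) * h2
      + (y:ℂ) ^ 2 * s ^ 2 * ((x:ℂ) ^ 2 + (y:ℂ) ^ 2)⁻¹ * h1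
      - 2 * (y:ℂ) ^ 2 * s ^ 2 * ((x:ℂ) ^ 2 + (y:ℂ) ^ 2)⁻¹ * h2
  linear_combination uHyp s x y * key
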